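/- Consider the DSG method under the saddle-point assumption, with G(z⁽ᵏ⁾) ≠ 0 for all k, and suppose there is C > 0 with ‖G(z⁽ᵏ⁾)‖₂ ≤ C for all k. Then there exists a constant C' > 0 such that for every ε > 0 and every natural number K with K ≥ C'·ε⁻², the averaged iterate x̄⁽ᴷ⁺¹⁾ satisfies ‖F(x̄⁽ᴷ⁺¹⁾)‖₂ + ‖A x̄⁽ᴷ⁺¹⁾ − b‖₂ ≤ ε and f₀(x̄⁽ᴷ⁺¹⁾) ≤ p* + ε. -/

import Mathlib

open scoped RealInnerProductSpace
open Matrix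

/-- `A x` for `A` an `l × n` real matrix and `x ∈ ℝⁿ`, as Euclidean spaces. -/
noncomputable def mulVecE {l n : ℕ} (A : Matrix (Fin l) (Fin n) ℝ)
    (x : EuclideanSpace ℝ (Fin n)) : EuclideanSpace ℝ (Fin l) :=
  Matrix.toEuclideanLin A x

/-- `F(x) = (max{f₁(x),0}, …, max{f_m(x),0})`. -/
noncomputable def Fplus {n m : ℕ} (f : Fin m → EuclideanSpace ℝ (Fin n) → ℝ)
    (x : EuclideanSpace ℝ (Fin n)) : EuclideanSpace ℝ (Fin m) :=
  (WithLp.equiv 2 (Fin m → ℝ)).symm fun i => max (f i x) 0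

/-- The Lagrangian `L(x, λ, ν) = f₀(x) + λᵀF(x) + νᵀ(Ax - b)`. -/
noncomputable def Lag {n m l : ℕ} (f0 : EuclideanSpace ℝ (Fin n) → ℝ)
    (f : Fin m → EuclideanSpace ℝ (Fin n) → ℝ)
    (A : Matrix (Fin l) (Fin n) ℝ) (b : EuclideanSpace ℝ (Fin l))
    (x : EuclideanSpace ℝ (Fin n)) (lam : EuclideanSpace ℝ (Fin m))
    (nu : EuclideanSpace ℝ (Fin l)) : ℝ :=
  f0 x + ⟪lam, Fplus f x⟫ + ⟪nu, mulVecE A x - b⟫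



lemma dsg_beta_one (β : ℕ → ℝ) (hβ0 : β 0 = 1) (hβ : ∀ k, β (k+1) = β k + 1/β k) :
    ∀ k, 1 ≤ β k := by
  intro k
  induction k with
  | zero => simp [hβ0]
  | succ k ih =>
    have h0 : 0 < β k := lt_of_lt_of_le one_pos ih
    rw [hβ k]
    have : 0 < 1/β k := by positivity
    linarith

lemma dsg_beta_mono (β : ℕ → ℝ) (hβ0 : β 0 = 1) (hβ : ∀ k, β (k+1) = β k + 1/β k) :
    ∀ k, β k ≤ β (k+1) := by
  intro k
  have h0 : 0 < β k := lt_of_lt_of_le one_pos (dsg_beta_one β hβ0 hβ k)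
  rw [hβ k]
  have : 0 < 1/β k := by positivity
  linarith

lemma dsg_beta_lower (β : ℕ → ℝ) (hβ0 : β 0 = 1) (hβ : ∀ k, β (k+1) = β k + 1/β k) :
    ∀ k : ℕ, 2*(k:ℝ)+1 ≤ (β k)^2 := by
  intro k
  induction k with
  | zero => simp [hβ0]
  | succ k ih =>
    have h0 : 0 < β k := lt_of_lt_of_le one_pos (dsg_beta_one β hβ0 hβ k)
    rw [hβ k]
    have he : (β k + 1/β k)^2 = (β k)^2 + 2 + (1/β k)^2 := by field_simp; ring
    have h2 : 0 ≤ (1/β k)^2 := sq_nonneg _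
    push_cast
    nlinarith

lemma dsg_beta_upper (β : ℕ → ℝ) (hβ0 : β 0 = 1) (hβ : ∀ k, β (k+1) = β k + 1/β k) :
    ∀ k : ℕ, (β k)^2 ≤ 3*(k:ℝ)+3 := by
  intro k
  induction k with
  | zero => norm_num [hβ0]
  | succ k ih =>
    have h1 : 1 ≤ β k := dsg_beta_one β hβ0 hβ k
    have h0 : 0 < β k := lt_of_lt_of_le one_pos h1
    rw [hβ k]
    have he : (β k + 1/β k)^2 = (β k)^2 + 2 + (1/β k)^2 := by field_simp; ring
    have h2 : (1/β k)^2 ≤ 1 := by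
      rw [div_pow, one_pow, div_le_one (by positivity)]
      nlinarith
    push_cast
    nlinarith

lemma dsg_sqrt_step (K : ℕ) :
    (Real.sqrt (2*K+1))⁻¹ ≤ 2*Real.sqrt (K+1) - 2*Real.sqrt K := by
  set s := Real.sqrt (K:ℝ) with hs
  set t := Real.sqrt ((K:ℝ)+1) with ht
  set r := Real.sqrt (2*(K:ℝ)+1) with hr
  have hs0 : 0 ≤ s := Real.sqrt_nonneg _
  have ht0 : 0 ≤ t := Real.sqrt_nonneg _
  have hs2 : s^2 = K := Real.sq_sqrt (by positivity)
  have ht2 : t^2 = K+1 := Real.sq_sqrt (by positivity)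
  have hr2 : r^2 = 2*K+1 := Real.sq_sqrt (by positivity)
  have hr0 : 0 < r := Real.sqrt_pos.2 (by positivity)
  rw [inv_eq_one_div, div_le_iff₀ hr0]
  have hts : s ≤ t := Real.sqrt_le_sqrt (by linarith)
  have h1 : t^2 - s^2 = 1 := by rw [hs2, ht2]; ring
  have h3 : t + s ≤ 2*r := by nlinarith [sq_nonneg (t-s)]
  nlinarith [mul_nonneg (sub_nonneg.2 h3) (sub_nonneg.2 hts)]

lemma dsg_sum_inv_sqrt (K : ℕ) :
    ∑ j ∈ Finset.range K, (Real.sqrt (2*j+1))⁻¹ ≤ 2 * Real.sqrt K := by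
  induction K with
  | zero => simp
  | succ K ih =>
    rw [Finset.sum_range_succ]
    have := dsg_sqrt_step K
    push_cast at this ⊢
    linarith

lemma dsg_bb_le (β : ℕ → ℝ) (hβ0 : β 0 = 1) (hβ : ∀ k, β (k+1) = β k + 1/β k)
    (bb : ℕ → ℝ) (hbb0 : bb 0 = 1) (hbbS : ∀ k, bb (k+1) = β k) (K : ℕ) :
    bb K ≤ 2 * Real.sqrt (K+1) := by
  cases K with
  | zero =>
    rw [hbb0]
    have : (1:ℝ) ≤ Real.sqrt (0+1) := by norm_num
    push_cast
    linarith
  | succ K =>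
    rw [hbbS]
    have hb1 : 1 ≤ β K := dsg_beta_one β hβ0 hβ K
    have hup := dsg_beta_upper β hβ0 hβ K
    set t := Real.sqrt ((K:ℝ)+1+1) with ht
    have ht0 : 0 ≤ t := Real.sqrt_nonneg _
    have ht2 : t^2 = (K:ℝ)+2 := by rw [ht]; rw [Real.sq_sqrt (by positivity)]; ring
    push_cast
    nlinarith [sq_nonneg (β K - 2*t)]

lemma dsg_bb_invsum (β : ℕ → ℝ) (hβ0 : β 0 = 1) (hβ : ∀ k, β (k+1) = β k + 1/β k)
    (bb : ℕ → ℝ) (hbb0 : bb 0 = 1) (hbbS : ∀ k, bb (k+1) = β k) (K : ℕ) :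
    ∑ k ∈ Finset.range (K+1), (bb k)⁻¹ ≤ 3 * Real.sqrt (K+1) := by
  rw [Finset.sum_range_succ']
  simp only [hbb0, hbbS, inv_one]
  have h1 : ∀ j : ℕ, (β j)⁻¹ ≤ (Real.sqrt (2*j+1))⁻¹ := by
    intro j
    have hb1 : 1 ≤ β j := dsg_beta_one β hβ0 hβ j
    have hlow := dsg_beta_lower β hβ0 hβ j
    have hsp : 0 < Real.sqrt (2*(j:ℝ)+1) := Real.sqrt_pos.2 (by positivity)
    apply inv_anti₀ hsp
    have : Real.sqrt (2*(j:ℝ)+1) ≤ Real.sqrt ((β j)^2) := Real.sqrt_le_sqrt hlow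
    rwa [Real.sqrt_sq (by linarith)] at this
  have h2 : ∑ j ∈ Finset.range K, (β j)⁻¹ ≤ 2 * Real.sqrt K := by
    calc ∑ j ∈ Finset.range K, (β j)⁻¹ ≤ ∑ j ∈ Finset.range K, (Real.sqrt (2*j+1))⁻¹ :=
          Finset.sum_le_sum fun j _ => h1 j
      _ ≤ 2 * Real.sqrt K := dsg_sum_inv_sqrt K
  have h3 : Real.sqrt K ≤ Real.sqrt ((K:ℝ)+1) := Real.sqrt_le_sqrt (by linarith)
  have h4 : (1:ℝ) ≤ Real.sqrt ((K:ℝ)+1) := by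
    have := Real.sqrt_le_sqrt (show (1:ℝ) ≤ (K:ℝ)+1 by push_cast; linarith)
    simpa using this
  push_cast
  linarith

lemma dsg_amgm (B t r : ℝ) (hB : 1 ≤ B) (ht : 0 ≤ t) (hr : 0 ≤ r) :
    t*r - B⁻¹*t^2/2 ≤ B*r^2/2 := by
  have hB0 : 0 < B := lt_of_lt_of_le one_pos hB
  have key : 2*B*(t*r) ≤ t^2 + B^2*r^2 := by nlinarith [sq_nonneg (t - B*r)]
  have h2 : t*r ≤ (t^2 + B^2*r^2)/(2*B) := by
    rw [le_div_iff₀ (by positivity)]; nlinarith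
  have h3 : (t^2 + B^2*r^2)/(2*B) = B⁻¹*t^2/2 + B*r^2/2 := by
    field_simp
  linarith [h2, h3.le, h3.ge]

lemma dsg_abel (a P : ℕ → ℝ) (ha : ∀ k, a (k+1) ≤ a k)
    (hP0 : P 0 = 0) (hP : ∀ k, 0 ≤ P k) (K : ℕ) :
    a K * P (K+1) ≤ ∑ k ∈ Finset.range (K+1), a k * (P (k+1) - P k) := by
  induction K with
  | zero => simp [hP0]
  | succ K ih =>
    rw [Finset.sum_range_succ]
    nlinarith [ha K, hP (K+1), ih]

lemma dsg_regret {H : Type*} [NormedAddCommGroup H] [InnerProductSpace ℝ H]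
    (u s : ℕ → H) (z0 z : H) (zk : ℕ → H) (bb : ℕ → ℝ)
    (hu : ∀ k, ‖u k‖ = 1) (hs0 : s 0 = 0) (hs : ∀ k, s (k+1) = s k + u k)
    (hz : ∀ k, zk k = z0 - (bb k)⁻¹ • s k)
    (hbb1 : ∀ k, 1 ≤ bb k) (hbbmono : ∀ k, bb k ≤ bb (k+1)) (K : ℕ) :
    ∑ k ∈ Finset.range (K+1), ⟪u k, zk k - z⟫
      ≤ bb K * ‖z0 - z‖^2/2 + (1/2) * ∑ k ∈ Finset.range (K+1), (bb k)⁻¹ := by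
  have hbbpos : ∀ k, (0:ℝ) < bb k := fun k => lt_of_lt_of_le one_pos (hbb1 k)
  set P : ℕ → ℝ := fun k => ‖s k‖^2 with hP
  have hP0 : P 0 = 0 := by simp [hP, hs0]
  have hPnn : ∀ k, 0 ≤ P k := fun k => sq_nonneg _
  have hQ : ∀ k, ⟪u k, s k⟫ = (P (k+1) - P k - 1)/2 := by
    intro k
    have h1 : P (k+1) = P k + 2 * ⟪s k, u k⟫ + 1 := by
      simp only [hP, hs k]
      rw [norm_add_sq_real, hu k]
      norm_num
    rw [real_inner_comm]
    linarith
  have hT : ∀ k, ⟪u k, zk k - z⟫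
      = ⟪u k, z0 - z⟫ - (bb k)⁻¹ * ((P (k+1) - P k - 1)/2) := by
    intro k
    rw [← hQ k, hz k, sub_right_comm, inner_sub_right, real_inner_smul_right]
  have hssum : ∀ N, s N = ∑ k ∈ Finset.range N, u k := by
    intro N
    induction N with
    | zero => simp [hs0]
    | succ N ih => rw [hs N, ih, Finset.sum_range_succ]
  have hsum1 : ∑ k ∈ Finset.range (K+1), ⟪u k, z0 - z⟫ = ⟪s (K+1), z0 - z⟫ := by
    rw [hssum (K+1), sum_inner]
  have habel : (bb K)⁻¹ * P (K+1)
      ≤ ∑ k ∈ Finset.range (K+1), (bb k)⁻¹ * (P (k+1) - P k) :=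
    dsg_abel (fun k => (bb k)⁻¹) P (fun k => inv_anti₀ (hbbpos k) (hbbmono k))
      hP0 hPnn K
  have hcs : ⟪s (K+1), z0 - z⟫ ≤ ‖s (K+1)‖ * ‖z0 - z‖ := real_inner_le_norm _ _
  have hmain : ∑ k ∈ Finset.range (K+1), ⟪u k, zk k - z⟫
      ≤ ‖s (K+1)‖ * ‖z0 - z‖ - (bb K)⁻¹ * P (K+1)/2
        + (1/2) * ∑ k ∈ Finset.range (K+1), (bb k)⁻¹ := by
    calc ∑ k ∈ Finset.range (K+1), ⟪u k, zk k - z⟫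
        = ⟪s (K+1), z0 - z⟫
          - ∑ k ∈ Finset.range (K+1), (bb k)⁻¹ * ((P (k+1) - P k - 1)/2) := by
          rw [← hsum1, ← Finset.sum_sub_distrib]
          exact Finset.sum_congr rfl fun k _ => hT k
      _ = ⟪s (K+1), z0 - z⟫
          - (1/2) * ∑ k ∈ Finset.range (K+1), (bb k)⁻¹ * (P (k+1) - P k)
          + (1/2) * ∑ k ∈ Finset.range (K+1), (bb k)⁻¹ := by
          rw [Finset.mul_sum, Finset.mul_sum, sub_add, ← Finset.sum_sub_distrib]
          congr 1
          exact Finset.sum_congr rfl fun k _ => by ring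
      _ ≤ ‖s (K+1)‖ * ‖z0 - z‖ - (bb K)⁻¹ * P (K+1)/2
          + (1/2) * ∑ k ∈ Finset.range (K+1), (bb k)⁻¹ := by
          have := habel
          linarith [hcs]
  have hfinal : ‖s (K+1)‖ * ‖z0 - z‖ - (bb K)⁻¹ * P (K+1)/2 ≤ bb K * ‖z0 - z‖^2/2 := by
    have := dsg_amgm (bb K) ‖s (K+1)‖ ‖z0 - z‖ (hbb1 K) (norm_nonneg _) (norm_nonneg _)
    simpa [hP] using this
  linarith



lemma Fplus_apply {n m : ℕ} (f : Fin m → EuclideanSpace ℝ (Fin n) → ℝ)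
    (x : EuclideanSpace ℝ (Fin n)) (i : Fin m) : Fplus f x i = max (f i x) 0 := rfl

lemma inner_eq_sum {d : ℕ} (x y : EuclideanSpace ℝ (Fin d)) :
    ⟪x, y⟫ = ∑ i, x i * y i := by
  simp [PiLp.inner_apply, RCLike.inner_apply, conj_trivial]
  exact Finset.sum_congr rfl fun i _ => mul_comm _ _

lemma mulVecE_adjoint {l n : ℕ} (A : Matrix (Fin l) (Fin n) ℝ)
    (ν : EuclideanSpace ℝ (Fin l)) (y : EuclideanSpace ℝ (Fin n)) :
    ⟪mulVecE Aᵀ ν, y⟫ = ⟪ν, mulVecE A y⟫ := by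
  rw [inner_eq_sum, inner_eq_sum]
  simp only [mulVecE, Matrix.toEuclideanLin_apply]
  simp only [PiLp.toLp_apply, Matrix.mulVec, dotProduct,
    Matrix.transpose_apply]
  simp_rw [Finset.sum_mul, Finset.mul_sum]
  rw [Finset.sum_comm]
  congr 1; ext i; congr 1; ext j; ring

lemma mulVecE_sub {l n : ℕ} (A : Matrix (Fin l) (Fin n) ℝ)
    (x y : EuclideanSpace ℝ (Fin n)) :
    mulVecE A (x - y) = mulVecE A x - mulVecE A y := by
  simp [mulVecE, map_sub]

example {l n : ℕ} (A : Matrix (Fin l) (Fin n) ℝ) (c : ℝ) (x y : EuclideanSpace ℝ (Fin n)) :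
    mulVecE A (c • x + y) = c • mulVecE A x + mulVecE A y := by
  simp [mulVecE, map_add, _root_.map_smul]


lemma convexOn_sum_fin {n : ℕ} {ι : Type*} (t : Finset ι)
    (F : ι → EuclideanSpace ℝ (Fin n) → ℝ)
    (h : ∀ i ∈ t, ConvexOn ℝ Set.univ (F i)) :
    ConvexOn ℝ Set.univ (fun x => ∑ i ∈ t, F i x) := by
  classical
  induction t using Finset.induction with
  | empty => simpa using convexOn_const 0 convex_univ
  | insert _ _ hnot ih =>
    rename_i a s
    simp_rw [Finset.sum_insert hnot]
    exact (h a (Finset.mem_insert_self a s)).add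
      (ih fun i hi => h i (Finset.mem_insert_of_mem hi))

lemma lag_convexOn {n m l : ℕ} (f0 : EuclideanSpace ℝ (Fin n) → ℝ)
    (f : Fin m → EuclideanSpace ℝ (Fin n) → ℝ)
    (hf0 : ConvexOn ℝ Set.univ f0) (hf : ∀ i, ConvexOn ℝ Set.univ (f i))
    (A : Matrix (Fin l) (Fin n) ℝ) (b : EuclideanSpace ℝ (Fin l))
    (lam : EuclideanSpace ℝ (Fin m)) (nu : EuclideanSpace ℝ (Fin l))
    (hlam : ∀ i, 0 ≤ lam i) :
    ConvexOn ℝ Set.univ (fun x => Lag f0 f A b x lam nu) := by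
  have h2 : ConvexOn ℝ Set.univ (fun x => ⟪lam, Fplus f x⟫) := by
    have : (fun x : EuclideanSpace ℝ (Fin n) => ⟪lam, Fplus f x⟫)
        = fun x => ∑ i, lam i * max (f i x) 0 := by
      funext x; rw [inner_eq_sum]; rfl
    rw [this]
    apply convexOn_sum_fin
    intro i _
    have hm : ConvexOn ℝ Set.univ (fun x => max (f i x) 0) :=
      (hf i).sup (convexOn_const 0 convex_univ)
    simpa [smul_eq_mul] using hm.smul (hlam i)
  have h3 : ConvexOn ℝ Set.univ (fun x => ⟪nu, mulVecE A x - b⟫) := by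
    refine ⟨convex_univ, fun x _ y _ a c ha hc hac => le_of_eq ?_⟩
    have : mulVecE A (a • x + c • y) = a • mulVecE A x + c • mulVecE A y := by
      simp [mulVecE, map_add, _root_.map_smul]
    simp only [smul_eq_mul]
    rw [this]
    simp only [inner_sub_right, inner_add_right, real_inner_smul_right]
    linear_combination (inner ℝ nu b : ℝ) * hac
  have : (fun x => Lag f0 f A b x lam nu)
      = (fun x => (f0 x + ⟪lam, Fplus f x⟫) + ⟪nu, mulVecE A x - b⟫) := rfl
  rw [this]
  exact (hf0.add h2).add h3

variable {n m l : ℕ}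

noncomputable def pair3 (x : EuclideanSpace ℝ (Fin n)) (y : EuclideanSpace ℝ (Fin m))
    (z : EuclideanSpace ℝ (Fin l)) :
    WithLp 2 (WithLp 2 (EuclideanSpace ℝ (Fin n) × EuclideanSpace ℝ (Fin m))
      × EuclideanSpace ℝ (Fin l)) :=
  (WithLp.equiv 2 _).symm ((WithLp.equiv 2 _).symm (x, y), z)

lemma pair3_sub (x x' : EuclideanSpace ℝ (Fin n)) (y y' : EuclideanSpace ℝ (Fin m))
    (z z' : EuclideanSpace ℝ (Fin l)) :
    pair3 x y z - pair3 x' y' z' = pair3 (x - x') (y - y') (z - z') := rfl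

lemma pair3_add (x x' : EuclideanSpace ℝ (Fin n)) (y y' : EuclideanSpace ℝ (Fin m))
    (z z' : EuclideanSpace ℝ (Fin l)) :
    pair3 x y z + pair3 x' y' z' = pair3 (x + x') (y + y') (z + z') := rfl

lemma pair3_smul (c : ℝ) (x : EuclideanSpace ℝ (Fin n)) (y : EuclideanSpace ℝ (Fin m))
    (z : EuclideanSpace ℝ (Fin l)) :
    c • pair3 x y z = pair3 (c • x) (c • y) (c • z) := rfl

lemma pair3_inner (x x' : EuclideanSpace ℝ (Fin n)) (y y' : EuclideanSpace ℝ (Fin m))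
    (z z' : EuclideanSpace ℝ (Fin l)) :
    ⟪pair3 x y z, pair3 x' y' z'⟫ = ⟪x, x'⟫ + ⟪y, y'⟫ + ⟪z, z'⟫ := rfl

lemma pair3_norm_sq (x : EuclideanSpace ℝ (Fin n)) (y : EuclideanSpace ℝ (Fin m))
    (z : EuclideanSpace ℝ (Fin l)) :
    ‖pair3 x y z‖^2 = ‖x‖^2 + ‖y‖^2 + ‖z‖^2 := by
  rw [← real_inner_self_eq_norm_sq, pair3_inner, real_inner_self_eq_norm_sq,
    real_inner_self_eq_norm_sq, real_inner_self_eq_norm_sq]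

set_option maxHeartbeats 4000000 in
/-- DSG main theorem: `O(ε⁻²)` complexity of the dual subgradient method. -/
theorem dsg_complexity
    (n m l : ℕ)
    (f0 : EuclideanSpace ℝ (Fin n) → ℝ)
    (f : Fin m → EuclideanSpace ℝ (Fin n) → ℝ)
    (hf0 : ConvexOn ℝ Set.univ f0)
    (hf : ∀ i, ConvexOn ℝ Set.univ (f i))
    (A : Matrix (Fin l) (Fin n) ℝ) (b : EuclideanSpace ℝ (Fin l))
    (pstar : ℝ)
    (xstar : EuclideanSpace ℝ (Fin n))
    (lamstar : EuclideanSpace ℝ (Fin m)) (nustar : EuclideanSpace ℝ (Fin l))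
    -- x* is primal optimal with value p*
    (hxfeas : ∀ i, f i xstar ≤ 0) (hxeq : mulVecE A xstar = b)
    (hxval : f0 xstar = pstar)
    -- saddle-point assumption
    (hlamstar : ∀ i, 0 ≤ lamstar i)
    (hsaddle_eq : Lag f0 f A b xstar lamstar nustar = pstar)
    (hsaddle1 : ∀ (lam : EuclideanSpace ℝ (Fin m)) (nu : EuclideanSpace ℝ (Fin l)),
      (∀ i, 0 ≤ lam i) → Lag f0 f A b xstar lam nu ≤ pstar)
    (hsaddle2 : ∀ x, pstar ≤ Lag f0 f A b x lamstar nustar)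
    -- fixed subgradient selections g₀(x) ∈ ∂f₀(x), gᵢ(x) ∈ ∂Fᵢ(x)
    (g0 : EuclideanSpace ℝ (Fin n) → EuclideanSpace ℝ (Fin n))
    (hg0 : ∀ x y, ⟪g0 x, y - x⟫ ≤ f0 y - f0 x)
    (g : Fin m → EuclideanSpace ℝ (Fin n) → EuclideanSpace ℝ (Fin n))
    (hg : ∀ i x y, ⟪g i x, y - x⟫ ≤ max (f i y) 0 - max (f i x) 0)
    -- the DSG iterates z⁽ᵏ⁾ = (x⁽ᵏ⁾, λ⁽ᵏ⁾, ν⁽ᵏ⁾)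
    (xk : ℕ → EuclideanSpace ℝ (Fin n))
    (lamk : ℕ → EuclideanSpace ℝ (Fin m))
    (nuk : ℕ → EuclideanSpace ℝ (Fin l))
    (hlam0 : ∀ i, 0 ≤ lamk 0 i)
    -- G(z⁽ᵏ⁾): primal component Gx k and total Euclidean norm nG k
    (Gx : ℕ → EuclideanSpace ℝ (Fin n))
    (hGx : ∀ k, Gx k
      = g0 (xk k) + (∑ i, lamk k i • g i (xk k)) + mulVecE Aᵀ (nuk k))
    (nG : ℕ → ℝ)
    (hnG : ∀ k, nG k = Real.sqrt (‖Gx k‖ ^ 2 + ‖Fplus f (xk k)‖ ^ 2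
      + ‖mulVecE A (xk k) - b‖ ^ 2))
    -- G(z⁽ᵏ⁾) ≠ 0
    (hGne : ∀ k, ¬ (Gx k = 0 ∧ Fplus f (xk k) = 0 ∧ mulVecE A (xk k) - b = 0))
    -- the averaging sequences s⁽ᵏ⁾ and weights β
    (sx : ℕ → EuclideanSpace ℝ (Fin n))
    (slam : ℕ → EuclideanSpace ℝ (Fin m))
    (snu : ℕ → EuclideanSpace ℝ (Fin l))
    (hs0 : sx 0 = 0 ∧ slam 0 = 0 ∧ snu 0 = 0)
    (hsx : ∀ k, sx (k + 1) = sx k + (nG k)⁻¹ • Gx k)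
    (hslam : ∀ k, slam (k + 1) = slam k + (nG k)⁻¹ • (-(Fplus f (xk k))))
    (hsnu : ∀ k, snu (k + 1) = snu k + (nG k)⁻¹ • (-(mulVecE A (xk k) - b)))
    (β : ℕ → ℝ) (hβ0 : β 0 = 1) (hβ : ∀ k, β (k + 1) = β k + 1 / β k)
    (hxk : ∀ k, xk (k + 1) = xk 0 - (β k)⁻¹ • sx (k + 1))
    (hlamk : ∀ k, lamk (k + 1) = lamk 0 - (β k)⁻¹ • slam (k + 1))
    (hnuk : ∀ k, nuk (k + 1) = nuk 0 - (β k)⁻¹ • snu (k + 1))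
    -- a uniform bound on ‖G(z⁽ᵏ⁾)‖₂
    (C : ℝ) (hC : 0 < C) (hCb : ∀ k, nG k ≤ C)
    -- the averaged primal iterate x̄⁽ᴷ⁺¹⁾
    (xbar : ℕ → EuclideanSpace ℝ (Fin n))
    (hxbar : ∀ K : ℕ, xbar (K + 1)
      = (∑ k ∈ Finset.range (K + 1), (nG k)⁻¹)⁻¹ •
          ∑ k ∈ Finset.range (K + 1), (nG k)⁻¹ • xk k) :
    ∃ C' : ℝ, 0 < C' ∧ ∀ ε : ℝ, 0 < ε → ∀ K : ℕ, C' / ε ^ 2 ≤ (K : ℝ) →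
      ‖Fplus f (xbar (K + 1))‖ + ‖mulVecE A (xbar (K + 1)) - b‖ ≤ ε ∧
      f0 (xbar (K + 1)) ≤ pstar + ε := by
  classical
  obtain ⟨hsx0, hslam0, hsnu0⟩ := hs0
  -- positivity of nG
  have hnGnn : ∀ k, (0:ℝ) ≤ ‖Gx k‖^2 + ‖Fplus f (xk k)‖^2 + ‖mulVecE A (xk k) - b‖^2 :=
    fun k => by positivity
  have hnGsq : ∀ k, (nG k)^2 = ‖Gx k‖^2 + ‖Fplus f (xk k)‖^2 + ‖mulVecE A (xk k) - b‖^2 :=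
    fun k => by rw [hnG k]; exact Real.sq_sqrt (hnGnn k)
  have hnGpos : ∀ k, 0 < nG k := by
    intro k
    have hnn : 0 ≤ nG k := by rw [hnG k]; exact Real.sqrt_nonneg _
    rcases hnn.lt_or_eq with h | h
    · exact h
    · exfalso
      have h2 : ‖Gx k‖^2 + ‖Fplus f (xk k)‖^2 + ‖mulVecE A (xk k) - b‖^2 = 0 := by
        rw [← hnGsq k, ← h]; ring
      refine hGne k ⟨?_, ?_, ?_⟩
      · have h3 : ‖Gx k‖^2 = 0 := le_antisymm
          (by nlinarith [sq_nonneg ‖Fplus f (xk k)‖, sq_nonneg ‖mulVecE A (xk k) - b‖])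
          (sq_nonneg _)
        exact norm_eq_zero.1 (pow_eq_zero_iff two_ne_zero |>.1 h3)
      · have h3 : ‖Fplus f (xk k)‖^2 = 0 := le_antisymm
          (by nlinarith [sq_nonneg ‖Gx k‖, sq_nonneg ‖mulVecE A (xk k) - b‖])
          (sq_nonneg _)
        exact norm_eq_zero.1 (pow_eq_zero_iff two_ne_zero |>.1 h3)
      · have h3 : ‖mulVecE A (xk k) - b‖^2 = 0 := le_antisymm
          (by nlinarith [sq_nonneg ‖Gx k‖, sq_nonneg ‖Fplus f (xk k)‖])
          (sq_nonneg _)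
        exact norm_eq_zero.1 (pow_eq_zero_iff two_ne_zero |>.1 h3)
  have hnGne0 : ∀ k, nG k ≠ 0 := fun k => ne_of_gt (hnGpos k)
  have hwpos : ∀ k, (0:ℝ) < (nG k)⁻¹ := fun k => inv_pos.2 (hnGpos k)
  have hwC : ∀ k, C⁻¹ ≤ (nG k)⁻¹ := fun k => inv_anti₀ (hnGpos k) (hCb k)
  -- β and bb
  have hβ1 : ∀ k, 1 ≤ β k := dsg_beta_one β hβ0 hβ
  have hβpos : ∀ k, 0 < β k := fun k => lt_of_lt_of_le one_pos (hβ1 k)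
  set bb : ℕ → ℝ := fun k => Nat.casesOn k 1 β with hbbdef
  have hbb0 : bb 0 = 1 := rfl
  have hbbS : ∀ k, bb (k+1) = β k := fun _ => rfl
  have hbb1 : ∀ k, 1 ≤ bb k := by
    intro k
    cases k with
    | zero => rw [hbb0]
    | succ k => rw [hbbS]; exact hβ1 k
  have hbbmono : ∀ k, bb k ≤ bb (k+1) := by
    intro k
    cases k with
    | zero => rw [hbb0, hbbS, hβ0]
    | succ k => rw [hbbS, hbbS]; exact dsg_beta_mono β hβ0 hβ k
  -- nonnegativity of the dual iterates
  have hslamnp : ∀ k i, slam k i ≤ 0 := by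
    intro k
    induction k with
    | zero => intro i; rw [hslam0]; simp
    | succ k ih =>
      intro i
      rw [hslam k]
      have heval : (slam k + (nG k)⁻¹ • (-(Fplus f (xk k)))) i
          = slam k i + (nG k)⁻¹ * (-(Fplus f (xk k) i)) := rfl
      rw [heval]
      have hF : 0 ≤ Fplus f (xk k) i := le_max_right _ _
      nlinarith [ih i, hwpos k]
  have hlamknn : ∀ k i, 0 ≤ lamk k i := by
    intro k i
    cases k with
    | zero => exact hlam0 i
    | succ k =>
      rw [hlamk k]
      have heval : (lamk 0 - (β k)⁻¹ • slam (k+1)) i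
          = lamk 0 i - (β k)⁻¹ * slam (k+1) i := rfl
      rw [heval]
      have h1 := hslamnp (k+1) i
      have h2 : 0 < (β k)⁻¹ := inv_pos.2 (hβpos k)
      nlinarith [hlam0 i]
  -- closed forms of the iterates
  have hxkf : ∀ k, xk k = xk 0 - (bb k)⁻¹ • sx k := by
    intro k
    cases k with
    | zero => rw [hsx0]; simp
    | succ k => exact hxk k
  have hlamkf : ∀ k, lamk k = lamk 0 - (bb k)⁻¹ • slam k := by
    intro k
    cases k with
    | zero => rw [hslam0]; simp
    | succ k => exact hlamk k
  have hnukf : ∀ k, nuk k = nuk 0 - (bb k)⁻¹ • snu k := by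
    intro k
    cases k with
    | zero => rw [hsnu0]; simp
    | succ k => exact hnuk k
  -- the unit subgradient steps
  have hu : ∀ k, ‖pair3 ((nG k)⁻¹ • Gx k) ((nG k)⁻¹ • (-(Fplus f (xk k))))
      ((nG k)⁻¹ • (-(mulVecE A (xk k) - b)))‖ = 1 := by
    intro k
    have hsq : ‖pair3 ((nG k)⁻¹ • Gx k) ((nG k)⁻¹ • (-(Fplus f (xk k))))
        ((nG k)⁻¹ • (-(mulVecE A (xk k) - b)))‖^2 = 1 := by
      rw [pair3_norm_sq, norm_smul, norm_smul, norm_smul, norm_neg, norm_neg]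
      simp only [Real.norm_eq_abs, mul_pow, sq_abs]
      rw [← mul_add, ← mul_add, ← hnGsq k, ← mul_pow]
      rw [inv_mul_cancel₀ (hnGne0 k), one_pow]
    rw [← Real.sqrt_sq (norm_nonneg _), hsq, Real.sqrt_one]
  have hS0 : pair3 (sx 0) (slam 0) (snu 0) = 0 := by
    rw [hsx0, hslam0, hsnu0]; rfl
  have hS : ∀ k, pair3 (sx (k+1)) (slam (k+1)) (snu (k+1))
      = pair3 (sx k) (slam k) (snu k)
        + pair3 ((nG k)⁻¹ • Gx k) ((nG k)⁻¹ • (-(Fplus f (xk k))))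
          ((nG k)⁻¹ • (-(mulVecE A (xk k) - b))) := by
    intro k
    rw [pair3_add, hsx k, hslam k, hsnu k]
  have hZ : ∀ k, pair3 (xk k) (lamk k) (nuk k)
      = pair3 (xk 0) (lamk 0) (nuk 0) - (bb k)⁻¹ • pair3 (sx k) (slam k) (snu k) := by
    intro k
    rw [pair3_smul, pair3_sub, ← hxkf k, ← hlamkf k, ← hnukf k]
  -- the regret bound specialised to our iterates
  have regretB : ∀ (x : EuclideanSpace ℝ (Fin n)) (lam : EuclideanSpace ℝ (Fin m))
      (nu : EuclideanSpace ℝ (Fin l)) (K : ℕ),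
      ∑ k ∈ Finset.range (K+1), (nG k)⁻¹ *
        (⟪Gx k, xk k - x⟫ + ⟪-(Fplus f (xk k)), lamk k - lam⟫
          + ⟪-(mulVecE A (xk k) - b), nuk k - nu⟫)
      ≤ Real.sqrt (K+1) * ((‖xk 0 - x‖^2 + ‖lamk 0 - lam‖^2 + ‖nuk 0 - nu‖^2) + 2) := by
    intro x lam nu K
    have hreg := dsg_regret
      (fun k => pair3 ((nG k)⁻¹ • Gx k) ((nG k)⁻¹ • (-(Fplus f (xk k))))
        ((nG k)⁻¹ • (-(mulVecE A (xk k) - b))))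
      (fun k => pair3 (sx k) (slam k) (snu k))
      (pair3 (xk 0) (lamk 0) (nuk 0)) (pair3 x lam nu)
      (fun k => pair3 (xk k) (lamk k) (nuk k)) bb hu hS0 hS hZ hbb1 hbbmono K
    have hLHS : ∀ k, ⟪pair3 ((nG k)⁻¹ • Gx k) ((nG k)⁻¹ • (-(Fplus f (xk k))))
        ((nG k)⁻¹ • (-(mulVecE A (xk k) - b))),
        pair3 (xk k) (lamk k) (nuk k) - pair3 x lam nu⟫
        = (nG k)⁻¹ * (⟪Gx k, xk k - x⟫ + ⟪-(Fplus f (xk k)), lamk k - lam⟫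
          + ⟪-(mulVecE A (xk k) - b), nuk k - nu⟫) := by
      intro k
      rw [pair3_sub, pair3_inner, real_inner_smul_left, real_inner_smul_left,
        real_inner_smul_left]
      ring
    rw [Finset.sum_congr rfl (fun k _ => hLHS k)] at hreg
    have hnorm : ‖pair3 (xk 0) (lamk 0) (nuk 0) - pair3 x lam nu‖^2
        = ‖xk 0 - x‖^2 + ‖lamk 0 - lam‖^2 + ‖nuk 0 - nu‖^2 := by
      rw [pair3_sub, pair3_norm_sq]
    rw [hnorm] at hreg
    have hbbK : bb K ≤ 2 * Real.sqrt (K+1) := dsg_bb_le β hβ0 hβ bb hbb0 hbbS K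
    have hbbsum : ∑ k ∈ Finset.range (K+1), (bb k)⁻¹ ≤ 3 * Real.sqrt (K+1) :=
      dsg_bb_invsum β hβ0 hβ bb hbb0 hbbS K
    have hRnn : (0:ℝ) ≤ ‖xk 0 - x‖^2 + ‖lamk 0 - lam‖^2 + ‖nuk 0 - nu‖^2 := by positivity
    have hmm := mul_le_mul_of_nonneg_right hbbK hRnn
    have hgoal : Real.sqrt ((K:ℝ)+1) * ((‖xk 0 - x‖^2 + ‖lamk 0 - lam‖^2 + ‖nuk 0 - nu‖^2) + 2)
        = Real.sqrt ((K:ℝ)+1) * (‖xk 0 - x‖^2 + ‖lamk 0 - lam‖^2 + ‖nuk 0 - nu‖^2)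
          + 2 * Real.sqrt ((K:ℝ)+1) := by ring
    push_cast at hreg hbbK hbbsum hmm hgoal ⊢
    linarith [Real.sqrt_nonneg ((K:ℝ)+1)]
  -- the per-step gap inequality
  have gap : ∀ (x : EuclideanSpace ℝ (Fin n)) (lam : EuclideanSpace ℝ (Fin m))
      (nu : EuclideanSpace ℝ (Fin l)), (∀ i, 0 ≤ lam i) → ∀ k,
      Lag f0 f A b (xk k) lam nu - Lag f0 f A b x (lamk k) (nuk k)
        ≤ ⟪Gx k, xk k - x⟫ + ⟪-(Fplus f (xk k)), lamk k - lam⟫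
          + ⟪-(mulVecE A (xk k) - b), nuk k - nu⟫ := by
    intro x lam nu hlam k
    have h4 : ⟪Gx k, xk k - x⟫ = ⟪g0 (xk k), xk k - x⟫
        + (∑ i, lamk k i * ⟪g i (xk k), xk k - x⟫)
        + (⟪nuk k, mulVecE A (xk k) - b⟫ - ⟪nuk k, mulVecE A x - b⟫) := by
      rw [hGx k, inner_add_left, inner_add_left, sum_inner]
      congr 1
      · congr 1
        exact Finset.sum_congr rfl fun i _ => real_inner_smul_left _ _ _
      · rw [mulVecE_adjoint, mulVecE_sub, inner_sub_right, inner_sub_right,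
          inner_sub_right]
        ring
    have h1 : f0 (xk k) - f0 x ≤ ⟪g0 (xk k), xk k - x⟫ := by
      have h := hg0 (xk k) x
      have hneg : ⟪g0 (xk k), xk k - x⟫ = -⟪g0 (xk k), x - xk k⟫ := by
        rw [← inner_neg_right, neg_sub]
      linarith
    have h2 : ⟪lamk k, Fplus f (xk k)⟫ - ⟪lamk k, Fplus f x⟫
        ≤ ∑ i, lamk k i * ⟪g i (xk k), xk k - x⟫ := by
      rw [inner_eq_sum, inner_eq_sum, ← Finset.sum_sub_distrib]
      apply Finset.sum_le_sum
      intro i _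
      have hneg : ⟪g i (xk k), xk k - x⟫ = -⟪g i (xk k), x - xk k⟫ := by
        rw [← inner_neg_right, neg_sub]
      have key : Fplus f (xk k) i - Fplus f x i ≤ ⟪g i (xk k), xk k - x⟫ := by
        have := hg i (xk k) x
        have e1 : Fplus f (xk k) i = max (f i (xk k)) 0 := rfl
        have e2 : Fplus f x i = max (f i x) 0 := rfl
        rw [e1, e2]
        linarith
      nlinarith [mul_le_mul_of_nonneg_left key (hlamknn k i)]
    have h5 : ⟪-(Fplus f (xk k)), lamk k - lam⟫
        = ⟪lam, Fplus f (xk k)⟫ - ⟪lamk k, Fplus f (xk k)⟫ := by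
      rw [inner_neg_left, inner_sub_right, real_inner_comm (Fplus f (xk k)) (lamk k),
        real_inner_comm (Fplus f (xk k)) lam]
      ring
    have h6 : ⟪-(mulVecE A (xk k) - b), nuk k - nu⟫
        = ⟪nu, mulVecE A (xk k) - b⟫ - ⟪nuk k, mulVecE A (xk k) - b⟫ := by
      rw [inner_neg_left, inner_sub_right,
        real_inner_comm (mulVecE A (xk k) - b) (nuk k),
        real_inner_comm (mulVecE A (xk k) - b) nu]
      ring
    have hL1 : Lag f0 f A b (xk k) lam nu
        = f0 (xk k) + ⟪lam, Fplus f (xk k)⟫ + ⟪nu, mulVecE A (xk k) - b⟫ := rfl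
    have hL2 : Lag f0 f A b x (lamk k) (nuk k)
        = f0 x + ⟪lamk k, Fplus f x⟫ + ⟪nuk k, mulVecE A x - b⟫ := rfl
    rw [hL1, hL2]
    linarith [h1, h2, h4, h5, h6]
  -- the master bound for the averaged iterate
  have masterK : ∀ (K : ℕ) (lam : EuclideanSpace ℝ (Fin m)) (nu : EuclideanSpace ℝ (Fin l)),
      (∀ i, 0 ≤ lam i) →
      Lag f0 f A b (xbar (K+1)) lam nu - pstar
        ≤ C * ((‖xk 0 - xstar‖^2 + ‖lamk 0 - lam‖^2 + ‖nuk 0 - nu‖^2) + 2)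
            / Real.sqrt (K+1) := by
    intro K lam nu hlam
    set Rsq : ℝ := ‖xk 0 - xstar‖^2 + ‖lamk 0 - lam‖^2 + ‖nuk 0 - nu‖^2 with hRsqdef
    have hRsqnn : 0 ≤ Rsq := by positivity
    set δ : ℝ := ∑ k ∈ Finset.range (K+1), (nG k)⁻¹ with hδdef
    have hδpos : 0 < δ := Finset.sum_pos (fun k _ => hwpos k) Finset.nonempty_range_add_one
    have hδge : ((K:ℝ)+1) * C⁻¹ ≤ δ := by
      rw [hδdef]
      calc ((K:ℝ)+1) * C⁻¹ = ∑ _k ∈ Finset.range (K+1), C⁻¹ := by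
            rw [Finset.sum_const, Finset.card_range]; push_cast; ring
        _ ≤ ∑ k ∈ Finset.range (K+1), (nG k)⁻¹ := Finset.sum_le_sum fun k _ => hwC k
    have hconv := lag_convexOn f0 f hf0 hf A b lam nu hlam
    have hxbarW : xbar (K+1) = ∑ k ∈ Finset.range (K+1), (δ⁻¹ * (nG k)⁻¹) • xk k := by
      rw [hxbar K, Finset.smul_sum]
      exact Finset.sum_congr rfl fun k _ => (smul_smul _ _ _)
    have hwsum : ∑ k ∈ Finset.range (K+1), δ⁻¹ * (nG k)⁻¹ = 1 := by
      rw [← Finset.mul_sum]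
      exact inv_mul_cancel₀ (ne_of_gt hδpos)
    have hjen : Lag f0 f A b (xbar (K+1)) lam nu
        ≤ ∑ k ∈ Finset.range (K+1), (δ⁻¹ * (nG k)⁻¹) * Lag f0 f A b (xk k) lam nu := by
      have hm := hconv.map_sum_le (p := xk) (fun k _ => mul_nonneg (inv_nonneg.2 hδpos.le) (hwpos k).le) hwsum
        (fun k _ => Set.mem_univ _)
      rw [hxbarW]
      simpa [smul_eq_mul] using hm
    have hsumB : ∑ k ∈ Finset.range (K+1), (nG k)⁻¹ * (Lag f0 f A b (xk k) lam nu - pstar)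
        ≤ Real.sqrt (K+1) * (Rsq + 2) := by
      calc ∑ k ∈ Finset.range (K+1), (nG k)⁻¹ * (Lag f0 f A b (xk k) lam nu - pstar)
          ≤ ∑ k ∈ Finset.range (K+1), (nG k)⁻¹ *
              (Lag f0 f A b (xk k) lam nu - Lag f0 f A b xstar (lamk k) (nuk k)) := by
            apply Finset.sum_le_sum
            intro k _
            have hsp := hsaddle1 (lamk k) (nuk k) (fun i => hlamknn k i)
            exact mul_le_mul_of_nonneg_left (by linarith) (hwpos k).le
        _ ≤ ∑ k ∈ Finset.range (K+1), (nG k)⁻¹ *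
              (⟪Gx k, xk k - xstar⟫ + ⟪-(Fplus f (xk k)), lamk k - lam⟫
                + ⟪-(mulVecE A (xk k) - b), nuk k - nu⟫) := by
            apply Finset.sum_le_sum
            intro k _
            exact mul_le_mul_of_nonneg_left (gap xstar lam nu hlam k) (hwpos k).le
        _ ≤ Real.sqrt (K+1) * (Rsq + 2) := regretB xstar lam nu K
    have hsplit : ∑ k ∈ Finset.range (K+1), (nG k)⁻¹ * (Lag f0 f A b (xk k) lam nu - pstar)
        = (∑ k ∈ Finset.range (K+1), (nG k)⁻¹ * Lag f0 f A b (xk k) lam nu) - δ * pstar := by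
      rw [hδdef, Finset.sum_mul]
      rw [← Finset.sum_sub_distrib]
      exact Finset.sum_congr rfl fun k _ => by ring
    have hLxbar : Lag f0 f A b (xbar (K+1)) lam nu - pstar
        ≤ δ⁻¹ * ∑ k ∈ Finset.range (K+1), (nG k)⁻¹ * (Lag f0 f A b (xk k) lam nu - pstar) := by
      rw [hsplit, mul_sub]
      have e1 : δ⁻¹ * (δ * pstar) = pstar := by
        rw [← mul_assoc, inv_mul_cancel₀ (ne_of_gt hδpos), one_mul]
      rw [e1]
      have e2 : δ⁻¹ * ∑ k ∈ Finset.range (K+1), (nG k)⁻¹ * Lag f0 f A b (xk k) lam nu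
          = ∑ k ∈ Finset.range (K+1), (δ⁻¹ * (nG k)⁻¹) * Lag f0 f A b (xk k) lam nu := by
        rw [Finset.mul_sum]
        exact Finset.sum_congr rfl fun k _ => by ring
      rw [e2]
      linarith [hjen]
    have hstep : Lag f0 f A b (xbar (K+1)) lam nu - pstar
        ≤ δ⁻¹ * (Real.sqrt (K+1) * (Rsq + 2)) :=
      le_trans hLxbar (mul_le_mul_of_nonneg_left hsumB (inv_nonneg.2 hδpos.le))
    have hδinv : δ⁻¹ ≤ C / ((K:ℝ)+1) := by
      have hpos : (0:ℝ) < ((K:ℝ)+1) * C⁻¹ := by positivity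
      calc δ⁻¹ ≤ (((K:ℝ)+1) * C⁻¹)⁻¹ := inv_anti₀ hpos hδge
        _ = C / ((K:ℝ)+1) := by
          rw [mul_inv, inv_inv]
          ring
    have hmul : δ⁻¹ * (Real.sqrt (K+1) * (Rsq + 2))
        ≤ (C / ((K:ℝ)+1)) * (Real.sqrt (K+1) * (Rsq + 2)) :=
      mul_le_mul_of_nonneg_right hδinv (by positivity)
    have halg : (C / ((K:ℝ)+1)) * (Real.sqrt (K+1) * (Rsq + 2))
        = C * (Rsq + 2) / Real.sqrt (K+1) := by
      have h1 : Real.sqrt ((K:ℝ)+1) ^ 2 = (K:ℝ)+1 := Real.sq_sqrt (by positivity)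
      have h2 : Real.sqrt ((K:ℝ)+1) ≠ 0 := by positivity
      rw [div_mul_eq_mul_div, div_eq_div_iff (by positivity) h2]
      linear_combination (C*(Rsq + 2)) * h1
    push_cast at hstep hmul halg ⊢
    linarith
  -- choose the constant
  set R0 : ℝ := ‖xk 0 - xstar‖^2 + (‖lamk 0 - lamstar‖+1)^2 + (‖nuk 0 - nustar‖+1)^2
    with hR0def
  have hR0nn : 0 ≤ R0 := by positivity
  set D : ℝ := C * (R0 + 2) with hDdef
  have hDpos : 0 < D := by positivity
  set E : ℝ := D * (1 + ‖nustar‖) with hEdef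
  have hEpos : 0 < E := by positivity
  have hDE : D ≤ E := by nlinarith [norm_nonneg nustar]
  refine ⟨E^2, by positivity, ?_⟩
  intro ε hε K hK
  have hK1 : E^2/ε^2 ≤ (K:ℝ) := hK
  have hsqK : E/ε ≤ Real.sqrt ((K:ℝ)+1) := by
    have h1 : Real.sqrt (E^2/ε^2) ≤ Real.sqrt ((K:ℝ)+1) := Real.sqrt_le_sqrt (by linarith)
    have h2 : Real.sqrt (E^2/ε^2) = E/ε := by
      rw [← div_pow, Real.sqrt_sq (by positivity)]
    linarith
  have hEε : 0 < E/ε := by positivity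
  have hsqpos : 0 < Real.sqrt ((K:ℝ)+1) := lt_of_lt_of_le hEε hsqK
  have hEbound : E / Real.sqrt ((K:ℝ)+1) ≤ ε := by
    have h1 : E / Real.sqrt ((K:ℝ)+1) ≤ E / (E/ε) :=
      div_le_div_of_nonneg_left hEpos.le hEε hsqK
    have h2 : E / (E/ε) = ε := by field_simp
    linarith
  set Fb : EuclideanSpace ℝ (Fin m) := Fplus f (xbar (K+1)) with hFbdef
  set rb : EuclideanSpace ℝ (Fin l) := mulVecE A (xbar (K+1)) - b with hrbdef
  set u : EuclideanSpace ℝ (Fin m) := if Fb = 0 then 0 else ‖Fb‖⁻¹ • Fb with hudef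
  set v : EuclideanSpace ℝ (Fin l) := if rb = 0 then 0 else ‖rb‖⁻¹ • rb with hvdef
  have huF : ⟪u, Fb⟫ = ‖Fb‖ := by
    rw [hudef]
    split_ifs with h
    · rw [h]; simp
    · have hne : ‖Fb‖ ≠ 0 := fun hh => h (norm_eq_zero.1 hh)
      rw [real_inner_smul_left, real_inner_self_eq_norm_sq, sq, ← mul_assoc,
        inv_mul_cancel₀ hne, one_mul]
  have hvr : ⟪v, rb⟫ = ‖rb‖ := by
    rw [hvdef]
    split_ifs with h
    · rw [h]; simp
    · have hne : ‖rb‖ ≠ 0 := fun hh => h (norm_eq_zero.1 hh)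
      rw [real_inner_smul_left, real_inner_self_eq_norm_sq, sq, ← mul_assoc,
        inv_mul_cancel₀ hne, one_mul]
  have hunorm : ‖u‖ ≤ 1 := by
    rw [hudef]
    split_ifs with h
    · simp
    · have hne : ‖Fb‖ ≠ 0 := fun hh => h (norm_eq_zero.1 hh)
      rw [norm_smul, norm_inv, norm_norm, inv_mul_cancel₀ hne]
  have hvnorm : ‖v‖ ≤ 1 := by
    rw [hvdef]
    split_ifs with h
    · simp
    · have hne : ‖rb‖ ≠ 0 := fun hh => h (norm_eq_zero.1 hh)
      rw [norm_smul, norm_inv, norm_norm, inv_mul_cancel₀ hne]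
  have hunn : ∀ i, 0 ≤ u i := by
    intro i
    rw [hudef]
    split_ifs with h
    · simp
    · have heval : (‖Fb‖⁻¹ • Fb) i = ‖Fb‖⁻¹ * Fb i := rfl
      rw [heval]
      have hFbi : 0 ≤ Fb i := le_max_right (f i (xbar (K+1))) 0
      exact mul_nonneg (inv_nonneg.2 (norm_nonneg _)) hFbi
  have hlamhat : ∀ i, 0 ≤ (lamstar + u) i := by
    intro i
    have heval : (lamstar + u) i = lamstar i + u i := rfl
    rw [heval]
    exact add_nonneg (hlamstar i) (hunn i)
  have hm1 := masterK K (lamstar + u) (nustar + v) hlamhat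
  have hbnd1 : ‖lamk 0 - (lamstar + u)‖^2 ≤ (‖lamk 0 - lamstar‖+1)^2 := by
    have h1 : ‖lamk 0 - (lamstar + u)‖ ≤ ‖lamk 0 - lamstar‖ + ‖u‖ := by
      rw [sub_add_eq_sub_sub]
      exact norm_sub_le _ _
    have h2 : ‖lamk 0 - (lamstar + u)‖ ≤ ‖lamk 0 - lamstar‖ + 1 := by linarith
    exact pow_le_pow_left₀ (norm_nonneg _) h2 2
  have hbnd2 : ‖nuk 0 - (nustar + v)‖^2 ≤ (‖nuk 0 - nustar‖+1)^2 := by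
    have h1 : ‖nuk 0 - (nustar + v)‖ ≤ ‖nuk 0 - nustar‖ + ‖v‖ := by
      rw [sub_add_eq_sub_sub]
      exact norm_sub_le _ _
    have h2 : ‖nuk 0 - (nustar + v)‖ ≤ ‖nuk 0 - nustar‖ + 1 := by linarith
    exact pow_le_pow_left₀ (norm_nonneg _) h2 2
  have hm1' : Lag f0 f A b (xbar (K+1)) (lamstar+u) (nustar+v) - pstar
      ≤ D / Real.sqrt ((K:ℝ)+1) := by
    refine le_trans hm1 ?_
    apply (div_le_div_iff_of_pos_right hsqpos).2
    rw [hDdef, hR0def]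
    apply mul_le_mul_of_nonneg_left _ hC.le
    linarith
  have hlow : pstar + ‖Fb‖ + ‖rb‖ ≤ Lag f0 f A b (xbar (K+1)) (lamstar+u) (nustar+v) := by
    have hL : Lag f0 f A b (xbar (K+1)) (lamstar+u) (nustar+v)
        = Lag f0 f A b (xbar (K+1)) lamstar nustar + ⟪u, Fb⟫ + ⟪v, rb⟫ := by
      have e1 : Lag f0 f A b (xbar (K+1)) (lamstar+u) (nustar+v)
          = f0 (xbar (K+1)) + ⟪lamstar+u, Fb⟫ + ⟪nustar+v, rb⟫ := rfl
      have e2 : Lag f0 f A b (xbar (K+1)) lamstar nustar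
          = f0 (xbar (K+1)) + ⟪lamstar, Fb⟫ + ⟪nustar, rb⟫ := rfl
      rw [e1, e2, inner_add_left, inner_add_left]
      ring
    rw [hL, huF, hvr]
    linarith [hsaddle2 (xbar (K+1))]
  have h2den : D / Real.sqrt ((K:ℝ)+1) ≤ E / Real.sqrt ((K:ℝ)+1) :=
    (div_le_div_iff_of_pos_right hsqpos).2 hDE
  have hfeas : ‖Fb‖ + ‖rb‖ ≤ ε := by linarith
  have hm2 := masterK K lamstar nustar hlamstar
  have hm2' : Lag f0 f A b (xbar (K+1)) lamstar nustar - pstar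
      ≤ D / Real.sqrt ((K:ℝ)+1) := by
    refine le_trans hm2 ?_
    apply (div_le_div_iff_of_pos_right hsqpos).2
    have b1 : ‖lamk 0 - lamstar‖^2 ≤ (‖lamk 0 - lamstar‖+1)^2 := by
      nlinarith [norm_nonneg (lamk 0 - lamstar)]
    have b2 : ‖nuk 0 - nustar‖^2 ≤ (‖nuk 0 - nustar‖+1)^2 := by
      nlinarith [norm_nonneg (nuk 0 - nustar)]
    rw [hDdef, hR0def]
    apply mul_le_mul_of_nonneg_left _ hC.le
    linarith
  have hinnF : 0 ≤ ⟪lamstar, Fb⟫ := by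
    rw [hFbdef, inner_eq_sum]
    apply Finset.sum_nonneg
    intro i _
    exact mul_nonneg (hlamstar i) (le_max_right (f i (xbar (K+1))) 0)
  have hinnr : -(‖nustar‖ * ‖rb‖) ≤ ⟪nustar, rb⟫ := by
    have h1 := abs_real_inner_le_norm nustar rb
    have h2 := neg_abs_le (⟪nustar, rb⟫)
    linarith
  have hLdef : Lag f0 f A b (xbar (K+1)) lamstar nustar
      = f0 (xbar (K+1)) + ⟪lamstar, Fb⟫ + ⟪nustar, rb⟫ := rfl
  have hrbb : ‖rb‖ ≤ D / Real.sqrt ((K:ℝ)+1) := by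
    have := norm_nonneg Fb
    linarith
  have hEsplit : E / Real.sqrt ((K:ℝ)+1)
      = D / Real.sqrt ((K:ℝ)+1) + ‖nustar‖ * (D / Real.sqrt ((K:ℝ)+1)) := by
    rw [hEdef]
    field_simp
  have hmulnu : ‖nustar‖ * ‖rb‖ ≤ ‖nustar‖ * (D / Real.sqrt ((K:ℝ)+1)) :=
    mul_le_mul_of_nonneg_left hrbb (norm_nonneg _)
  have hobj : f0 (xbar (K+1)) ≤ pstar + ε := by linarith
  exact ⟨hfeas, hobj⟩
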